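/- Let R be a commutative ring and a = a_m X^m + ⋯ + a_0, b = b_n X^n + ⋯ + b_0 polynomials in R[X] presented with formal degrees m, n ≥ 1. If the resultant of a and b (the determinant of their (m+n)×(m+n) Sylvester matrix) is a unit in R, then a and b are comaximal in R[X] (there exist s, t with s·a + t·b = 1) and the formal leading coefficients a_m and b_n are comaximal in R. -/

import Mathlib

open Polynomial

/-- The Sylvester matrix of `a` and `b` with respect to formal degrees `m` and `n`:
the first `n` rows carry the coefficients of `a` (from `a.coeff m` down to `a.coeff 0`),
and the last `m` rows carry the coefficients of `b`. -/
def sylvester {R : Type*} [CommRing R] (m n : ℕ) (a b : R[X]) :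
    Matrix (Fin (n + m)) (Fin (n + m)) R :=
  Matrix.of fun i j =>
    if (i : ℕ) < n then
      (if (i : ℕ) ≤ (j : ℕ) ∧ (j : ℕ) ≤ (i : ℕ) + m then a.coeff (m + (i : ℕ) - (j : ℕ)) else 0)
    else
      (if (i : ℕ) - n ≤ (j : ℕ) ∧ (j : ℕ) ≤ (i : ℕ) then b.coeff ((i : ℕ) - (j : ℕ)) else 0)

/-- The resultant of `a` and `b` with respect to formal degrees `m` and `n`. -/
def resultant {R : Type*} [CommRing R] (m n : ℕ) (a b : R[X]) : R :=
  (sylvester m n a b).det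

lemma isCoprime_of_unit_comb {R : Type*} [CommRing R] {x y d s t : R}
    (h : IsUnit d) (hst : s * x + t * y = d) : IsCoprime x y := by
  obtain ⟨u, rfl⟩ := h
  refine ⟨(↑u⁻¹ : R) * s, (↑u⁻¹ : R) * t, ?_⟩
  rw [mul_assoc, mul_assoc, ← mul_add, hst, Units.inv_mul]

lemma sylvester_mulVec {R : Type*} [CommRing R] (m n : ℕ) (hm : 1 ≤ m) (hn : 1 ≤ n)
    (a b : R[X]) (ha : a.natDegree ≤ m) (hb : b.natDegree ≤ n) (i : Fin (n + m)) :
    (((sylvester m n a b).map C).mulVec (fun j : Fin (n + m) => X ^ (n + m - 1 - (j : ℕ)))) i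
      = if (i : ℕ) < n then X ^ (n - 1 - (i : ℕ)) * a else X ^ (n + m - 1 - (i : ℕ)) * b := by
  rw [Matrix.mulVec, dotProduct]
  simp only [Matrix.map_apply, _root_.sylvester, Matrix.of_apply, apply_ite C, map_zero]
  by_cases hi : (i : ℕ) < n
  · simp only [hi, if_true]
    rw [Fin.sum_univ_eq_sum_range
      (fun j => (if (i : ℕ) ≤ j ∧ j ≤ (i : ℕ) + m then C (a.coeff (m + (i : ℕ) - j)) else 0)
        * X ^ (n + m - 1 - j))]
    have key : ∀ j ∈ Finset.range (n + m),
        (if (i : ℕ) ≤ j ∧ j ≤ (i : ℕ) + m then C (a.coeff (m + (i : ℕ) - j)) else 0)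
          * X ^ (n + m - 1 - j)
        = if (i : ℕ) ≤ j ∧ j ≤ (i : ℕ) + m then
            C (a.coeff (m + (i : ℕ) - j)) * X ^ (n + m - 1 - j) else 0 := by
      intro j _; split <;> simp
    rw [Finset.sum_congr rfl key, Finset.sum_ite, Finset.sum_const_zero, add_zero]
    have hfilter : (Finset.range (n + m)).filter
        (fun j => (i : ℕ) ≤ j ∧ j ≤ (i : ℕ) + m) = Finset.Icc (i : ℕ) ((i : ℕ) + m) := by
      ext j
      simp only [Finset.mem_filter, Finset.mem_range, Finset.mem_Icc]
      omega
    rw [hfilter]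
    conv_rhs => rw [a.as_sum_range' (m + 1) (by omega)]
    rw [Finset.mul_sum]
    refine Finset.sum_nbij' (fun j => m + (i : ℕ) - j) (fun k => m + (i : ℕ) - k)
      ?_ ?_ ?_ ?_ ?_
    · intro j hj; simp only [Finset.mem_Icc] at hj; simp only [Finset.mem_range]; omega
    · intro k hk; simp only [Finset.mem_range] at hk; simp only [Finset.mem_Icc]; omega
    · intro j hj; simp only [Finset.mem_Icc] at hj; beta_reduce; omega
    · intro k hk; simp only [Finset.mem_range] at hk; beta_reduce; omega
    · intro j hj
      simp only [Finset.mem_Icc] at hj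
      have h2 : n + m - 1 - j = (n - 1 - (i : ℕ)) + (m + (i : ℕ) - j) := by omega
      rw [h2, pow_add, ← C_mul_X_pow_eq_monomial]
      ring
  · simp only [hi, if_false]
    rw [Fin.sum_univ_eq_sum_range
      (fun j => (if (i : ℕ) - n ≤ j ∧ j ≤ (i : ℕ) then C (b.coeff ((i : ℕ) - j)) else 0)
        * X ^ (n + m - 1 - j))]
    have key : ∀ j ∈ Finset.range (n + m),
        (if (i : ℕ) - n ≤ j ∧ j ≤ (i : ℕ) then C (b.coeff ((i : ℕ) - j)) else 0)
          * X ^ (n + m - 1 - j)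
        = if (i : ℕ) - n ≤ j ∧ j ≤ (i : ℕ) then
            C (b.coeff ((i : ℕ) - j)) * X ^ (n + m - 1 - j) else 0 := by
      intro j _; split <;> simp
    rw [Finset.sum_congr rfl key, Finset.sum_ite, Finset.sum_const_zero, add_zero]
    have hfilter : (Finset.range (n + m)).filter
        (fun j => (i : ℕ) - n ≤ j ∧ j ≤ (i : ℕ)) = Finset.Icc ((i : ℕ) - n) (i : ℕ) := by
      ext j
      have := i.isLt
      simp only [Finset.mem_filter, Finset.mem_range, Finset.mem_Icc]
      omega
    rw [hfilter]
    conv_rhs => rw [b.as_sum_range' (n + 1) (by omega)]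
    rw [Finset.mul_sum]
    have hin := i.isLt
    refine Finset.sum_nbij' (fun j => (i : ℕ) - j) (fun k => (i : ℕ) - k)
      ?_ ?_ ?_ ?_ ?_
    · intro j hj; simp only [Finset.mem_Icc] at hj; simp only [Finset.mem_range]; omega
    · intro k hk; simp only [Finset.mem_range] at hk; simp only [Finset.mem_Icc]; omega
    · intro j hj; simp only [Finset.mem_Icc] at hj; beta_reduce; omega
    · intro k hk; simp only [Finset.mem_range] at hk; beta_reduce; omega
    · intro j hj
      simp only [Finset.mem_Icc] at hj
      have h2 : n + m - 1 - j = (n + m - 1 - (i : ℕ)) + ((i : ℕ) - j) := by omega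
      rw [h2, pow_add, ← C_mul_X_pow_eq_monomial]
      ring

theorem comaximal_of_resultant_isUnit {R : Type*} [CommRing R] (m n : ℕ)
    (hm : 1 ≤ m) (hn : 1 ≤ n) (a b : R[X])
    (ha : a.degree ≤ (m : ℕ)) (hb : b.degree ≤ (n : ℕ))
    (hres : IsUnit (resultant m n a b)) :
    IsCoprime a b ∧ IsCoprime (a.coeff m) (b.coeff n) := by
  have ha' : a.natDegree ≤ m := natDegree_le_iff_degree_le.mpr ha
  have hb' : b.natDegree ≤ n := natDegree_le_iff_degree_le.mpr hb
  constructor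
  · -- polynomial coprimality
    set M := (sylvester m n a b).map (C : R →+* R[X]) with hMdef
    set w : Fin (n + m) → R[X] := fun j => X ^ (n + m - 1 - (j : ℕ)) with hwdef
    set last : Fin (n + m) := ⟨n + m - 1, by omega⟩ with hlast
    have hAdj : M.adjugate * M = (C (resultant m n a b)) • (1 : Matrix _ _ R[X]) := by
      rw [Matrix.adjugate_mul]
      congr 1
      rw [_root_.resultant, RingHom.map_det, RingHom.mapMatrix_apply]
    have key := congrArg (fun A => Matrix.mulVec A w last) hAdj
    simp only [← Matrix.mulVec_mulVec, Matrix.smul_mulVec, Matrix.one_mulVec] at key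
    have hrhs : (C (resultant m n a b) • w) last = C (resultant m n a b) := by
      simp only [Pi.smul_apply, smul_eq_mul, hwdef, hlast]
      norm_num
    rw [hrhs] at key
    have hveq := sylvester_mulVec m n hm hn a b ha' hb'
    have expand : M.adjugate.mulVec (M.mulVec w) last
        = (∑ k : Fin (n + m), if (k : ℕ) < n then
              M.adjugate last k * X ^ (n - 1 - (k : ℕ)) else 0) * a
          + (∑ k : Fin (n + m), if (k : ℕ) < n then 0 else
              M.adjugate last k * X ^ (n + m - 1 - (k : ℕ))) * b := by
      rw [Matrix.mulVec, dotProduct, Finset.sum_mul, Finset.sum_mul,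
        ← Finset.sum_add_distrib]
      refine Finset.sum_congr rfl fun k _ => ?_
      rw [hveq k]
      by_cases hk : (k : ℕ) < n <;> simp [hk, mul_assoc]
    rw [expand] at key
    exact isCoprime_of_unit_comb (hres.map (C : R →+* R[X])) key
  · -- leading coefficient coprimality
    set M := sylvester m n a b with hMdef
    set i0 : Fin (n + m) := ⟨0, by omega⟩ with hi0
    set in' : Fin (n + m) := ⟨n, by omega⟩ with hin'
    have key := congrArg (fun A => A i0 i0) (Matrix.adjugate_mul M)
    simp only [Matrix.mul_apply, Matrix.smul_apply, Matrix.one_apply_eq, smul_eq_mul,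
      mul_one] at key
    have hzero : ∀ k ∈ (Finset.univ : Finset (Fin (n + m))),
        k ∉ ({i0, in'} : Finset (Fin (n + m))) → M.adjugate i0 k * M k i0 = 0 := by
      intro k _ hk
      simp only [Finset.mem_insert, Finset.mem_singleton] at hk
      push_neg at hk
      have hk0 : (k : ℕ) ≠ 0 := by simpa [Fin.ext_iff, hi0] using hk.1
      have hkn : (k : ℕ) ≠ n := by simpa [Fin.ext_iff, hin'] using hk.2
      have h1 : M k i0 = 0 := by
        simp only [hMdef, _root_.sylvester, Matrix.of_apply, hi0]
        split
        · rw [if_neg]; omega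
        · rw [if_neg]; omega
      rw [h1, mul_zero]
    rw [← Finset.sum_subset (Finset.subset_univ {i0, in'}) hzero] at key
    rw [Finset.sum_pair (by simp [hi0, hin', Fin.ext_iff]; omega)] at key
    have hMa : M i0 i0 = a.coeff m := by
      simp only [hMdef, _root_.sylvester, Matrix.of_apply, hi0]
      rw [if_pos (by omega : (0:ℕ) < n), if_pos (by omega)]
      norm_num
    have hMb : M in' i0 = b.coeff n := by
      simp only [hMdef, _root_.sylvester, Matrix.of_apply, hi0, hin']
      rw [if_neg (by omega : ¬ n < n), if_pos (by omega)]
      norm_num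
    rw [hMa, hMb] at key
    exact isCoprime_of_unit_comb hres key
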